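/- arXiv:1506.06653 — 8 statements merged into one kernel-verified Lean document; each statement's English description precedes it below -/
import Mathlib

section
/- For any binary string s of length L with periodic boundary conditions, the string R184(s) defined by [R184(s)]_i = s_{i-1} + s_i·s_{i+1} − s_{i-1}·s_i has the same sum of entries as s, i.e., rule 184 is number-conserving. -/
/-- Rule 184 on a cyclic binary string, algebraic form. -/
def R184 {L : ℕ} (s : ZMod L → ℤ) (i : ZMod L) : ℤ :=
  s (i - 1) + s i * s (i + 1) - s (i - 1) * s i

lemma shift_sum {L : ℕ} [NeZero L] (f : ZMod L → ℤ) :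
    ∑ i : ZMod L, f (i - 1) = ∑ i : ZMod L, f i :=
  Fintype.sum_equiv (Equiv.subRight 1) _ _ (fun _ => rfl)

/-- Rule 184 is number-conserving. -/
theorem rule184_number_conserving (L : ℕ) [NeZero L] (s : ZMod L → ℤ)
    (hs : ∀ i, s i = 0 ∨ s i = 1) :
    ∑ i : ZMod L, R184 s i = ∑ i : ZMod L, s i := by
  unfold R184
  rw [show (∑ i : ZMod L, (s (i - 1) + s i * s (i + 1) - s (i - 1) * s i))
      = (∑ i : ZMod L, s (i - 1)) + (∑ i : ZMod L, s i * s (i + 1))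
        - (∑ i : ZMod L, s (i - 1) * s i) by
    rw [Finset.sum_sub_distrib, Finset.sum_add_distrib]]
  have h1 : (∑ i : ZMod L, s (i - 1) * s i) = ∑ i : ZMod L, s i * s (i + 1) := by
    exact Fintype.sum_equiv (Equiv.subRight (1 : ZMod L)) _ _ (fun i => by simp)
  rw [h1, shift_sum s]
  ring
end

section
/- Rule 184 on a cycle eventually eliminates all 00 pairs if density exceeds 1/2: if s is a cyclic binary string of length L with more ones than zeros, then after at most ⌊(L−2)/2⌋ iterations of R184 the resulting string contains no adjacent pair 00. -/
namespace Rule184Aux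

variable {L : ℕ}

lemma iter_binary (s : ZMod L → ℤ) (hs : ∀ i, s i = 0 ∨ s i = 1) :
    ∀ t i, (R184^[t] s) i = 0 ∨ (R184^[t] s) i = 1 := by
  intro t
  induction t with
  | zero => exact hs
  | succ t ih =>
    intro i
    rw [Function.iterate_succ_apply']
    rcases ih (i - 1) with h1 | h1 <;> rcases ih i with h2 | h2 <;>
      rcases ih (i + 1) with h3 | h3 <;> simp [R184, h1, h2, h3]

/-- Height function of the initial string: slope `+1` on zeros, `-1` on ones. -/
def ht (s : ZMod L → ℤ) : ℕ → ℤ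
  | 0 => 0
  | n + 1 => ht s n + 1 - 2 * s (n : ZMod L)

/-- Minimum of `u` over the points `m, m+2, …, m+2t`. -/
def Wmin (u : ℕ → ℤ) : ℕ → ℕ → ℤ
  | 0, m => u m
  | t + 1, m => min (Wmin u t m) (Wmin u t (m + 2))

lemma Wmin_le (u : ℕ → ℤ) : ∀ t m k, k ≤ t → Wmin u t m ≤ u (m + 2 * k) := by
  intro t
  induction t with
  | zero =>
    intro m k hk
    interval_cases k
    simp [Wmin]
  | succ t ih =>
    intro m k hk
    rcases Nat.lt_or_ge k (t + 1) with h | h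
    · exact le_trans (min_le_left _ _) (ih m k (Nat.lt_succ_iff.mp h))
    · have hk1 : k = t + 1 := le_antisymm hk h
      subst hk1
      have := ih (m + 2) t le_rfl
      have harith : m + 2 + 2 * t = m + 2 * (t + 1) := by ring
      rw [harith] at this
      exact le_trans (min_le_right _ _) this

lemma Wmin_exists (u : ℕ → ℤ) : ∀ t m, ∃ k ≤ t, Wmin u t m = u (m + 2 * k) := by
  intro t
  induction t with
  | zero => intro m; exact ⟨0, le_rfl, by simp [Wmin]⟩
  | succ t ih =>
    intro m
    rcases le_or_gt (Wmin u t m) (Wmin u t (m + 2)) with h | h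
    · obtain ⟨k, hk, hke⟩ := ih m
      exact ⟨k, Nat.le_succ_of_le hk, by simpa [Wmin, min_eq_left h] using hke⟩
    · obtain ⟨k, hk, hke⟩ := ih (m + 2)
      refine ⟨k + 1, by omega, ?_⟩
      have harith : m + 2 + 2 * k = m + 2 * (k + 1) := by ring
      rw [Wmin, min_eq_right h.le, hke, harith]

lemma key_min (x a b c : ℤ) (ha : a = 0 ∨ a = 1) (hb : b = 0 ∨ b = 1)
    (hc : c = 0 ∨ c = 1) :
    min (x + (1 - 2 * a)) (x + (1 - 2 * a) + (1 - 2 * b) + (1 - 2 * c)) =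
      min x (x + (1 - 2 * a) + (1 - 2 * b)) + (1 - 2 * (a + b * c - a * b)) := by
  rcases ha with rfl | rfl <;> rcases hb with rfl | rfl <;> rcases hc with rfl | rfl <;> omega

lemma slope (s : ZMod L → ℤ) (hs : ∀ i, s i = 0 ∨ s i = 1) :
    ∀ t m, Wmin (ht s) t (m + 1) =
      Wmin (ht s) t m + (1 - 2 * (R184^[t] s) ((m + t : ℕ) : ZMod L)) := by
  intro t
  induction t with
  | zero =>
    intro m
    show ht s (m + 1) = ht s m + (1 - 2 * s ((m + 0 : ℕ) : ZMod L))
    simp [ht]; ring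
  | succ t ih =>
    intro m
    have h1 := ih m
    have h2 := ih (m + 1)
    have h3 := ih (m + 2)
    set σ := R184^[t] s with hσ
    have hb := iter_binary s hs t
    rw [← hσ] at hb
    rw [Wmin, Wmin]
    have e2 : m + 1 + 1 = m + 2 := by ring
    have e3 : m + 2 + 1 = m + 3 := by ring
    rw [e2] at h2; rw [e3] at h3
    have c1 : ((m + 1 + t : ℕ) : ZMod L) = ((m + t : ℕ) : ZMod L) + 1 := by
      push_cast; ring
    have c2 : ((m + 2 + t : ℕ) : ZMod L) = ((m + t : ℕ) : ZMod L) + 1 + 1 := by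
      push_cast; ring
    rw [c1] at h2; rw [c2] at h3
    have hR : (R184^[t+1] s) ((m + (t + 1) : ℕ) : ZMod L)
        = σ ((m + t : ℕ) : ZMod L)
          + σ (((m + t : ℕ) : ZMod L) + 1) * σ (((m + t : ℕ) : ZMod L) + 1 + 1)
          - σ ((m + t : ℕ) : ZMod L) * σ (((m + t : ℕ) : ZMod L) + 1) := by
      rw [Function.iterate_succ_apply', ← hσ]
      have cc : ((m + (t + 1) : ℕ) : ZMod L) = ((m + t : ℕ) : ZMod L) + 1 := by
        push_cast; ring
      rw [cc]
      unfold R184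
      congr 2 <;> ring_nf
    have e4 : m + 1 + 2 = m + 3 := by ring
    rw [hR, e4, h3, h2, h1]
    exact key_min _ _ _ _ (hb _) (hb _) (hb _)

lemma ht_formula (s : ZMod L → ℤ) :
    ∀ n, ht s n = (n : ℤ) - 2 * ∑ k ∈ Finset.range n, s (k : ZMod L) := by
  intro n
  induction n with
  | zero => simp [ht]
  | succ n ih =>
    rw [ht, ih, Finset.sum_range_succ]
    push_cast; ring

lemma sum_range_eq [NeZero L] (s : ZMod L → ℤ) :
    ∑ k ∈ Finset.range L, s (k : ZMod L) = ∑ i : ZMod L, s i := by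
  refine Finset.sum_nbij' (fun k => (k : ZMod L)) (fun i => i.val) ?_ ?_ ?_ ?_ ?_
  · intro a _; exact Finset.mem_univ _
  · intro a _; exact Finset.mem_range.mpr (ZMod.val_lt a)
  · intro a ha; exact ZMod.val_natCast_of_lt (Finset.mem_range.mp ha)
  · intro a _; simp [ZMod.natCast_val]
  · intro a _; rfl

lemma ht_periodic [NeZero L] (s : ZMod L → ℤ) :
    ∀ n, ht s (n + L) = ht s n + ((L : ℤ) - 2 * ∑ i : ZMod L, s i) := by
  intro n
  induction n with
  | zero => simp [ht_formula, sum_range_eq]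
  | succ n ih =>
    have e : n + 1 + L = (n + L) + 1 := by ring
    rw [e, ht, ih, ht]
    have : ((n + L : ℕ) : ZMod L) = ((n : ℕ) : ZMod L) := by
      push_cast; simp
    rw [this]; ring

end Rule184Aux


open Rule184Aux in
/-- If a cyclic string has more ones than zeros, after ⌊(L-2)/2⌋ iterations of
rule 184 there is no adjacent 00 pair. -/
theorem rule184_eliminates_00 (L : ℕ) [NeZero L]
    (s : ZMod L → ℤ) (hs : ∀ i, s i = 0 ∨ s i = 1)
    (hρ : (L : ℤ) < 2 * ∑ i : ZMod L, s i) :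
    ∀ i, ¬ ((R184^[(L - 2) / 2] s) i = 0 ∧ (R184^[(L - 2) / 2] s) (i + 1) = 0) := by
  intro i ⟨h0, h1⟩
  set T := (L - 2) / 2 with hT
  set u := ht s with hu
  have hL1 : 1 ≤ L := Nat.one_le_iff_ne_zero.mpr (NeZero.ne L)
  -- choose a nonnegative lift m of i - T
  have hmul : T + 1 ≤ L * (T + 1) :=
    Nat.le_mul_of_pos_left _ (Nat.pos_of_ne_zero (NeZero.ne L))
  obtain ⟨m, hm⟩ : ∃ m : ℕ, m + T = i.val + L * (T + 1) :=
    ⟨i.val + L * (T + 1) - T, by omega⟩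
  have hcast : ((m + T : ℕ) : ZMod L) = i := by
    rw [hm]; push_cast; simp [ZMod.natCast_val]
  have hcast1 : ((m + 1 + T : ℕ) : ZMod L) = i + 1 := by
    have h' : m + 1 + T = (i.val + L * (T + 1)) + 1 := by omega
    rw [h']; push_cast; simp [ZMod.natCast_val]
  -- the two slopes at time T are both +1
  have hA := slope s hs T m
  have hB := slope s hs T (m + 1)
  rw [hcast, h0] at hA
  rw [hcast1, h1] at hB
  have e2 : m + 1 + 1 = m + 2 := by ring
  rw [e2] at hB
  -- so Wmin at m+2 is Wmin at m plus 2
  have hW2 : Wmin u T (m + 2) = Wmin u T m + 2 := by rw [hB, hA]; ring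
  -- every point of the right window is ≥ Wmin u T m + 2
  have hRight : ∀ k ≤ T, Wmin u T m + 2 ≤ u (m + 2 + 2 * k) := by
    intro k hk
    have := Wmin_le u T (m + 2) k hk
    omega
  -- the left minimum is attained at k = 0
  have hum : u m = Wmin u T m := by
    obtain ⟨k, hk, hke⟩ := Wmin_exists u T m
    rcases Nat.eq_zero_or_pos k with rfl | hkpos
    · simpa using hke.symm
    · exfalso
      have hk1 : k - 1 ≤ T := by omega
      have := hRight (k - 1) hk1
      have harith : m + 2 + 2 * (k - 1) = m + 2 * k := by omega
      rw [harith] at this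
      omega
  -- hence u (m + 2T + 2) ≥ u m + 2
  have hfar : u m + 2 ≤ u (m + 2 * T + 2) := by
    have := hRight T le_rfl
    have harith : m + 2 + 2 * T = m + 2 * T + 2 := by ring
    rw [harith] at this
    omega
  set D : ℤ := (L : ℤ) - 2 * ∑ j : ZMod L, s j with hD
  have hDneg : D < 0 := by omega
  rcases Nat.even_or_odd L with hev | hod
  · -- L even : 2T + 2 = L
    have h2T : 2 * T + 2 = L := by
      obtain ⟨c, hc⟩ := hev; omega
    have := ht_periodic s m
    rw [← hD, ← hu, ← h2T] at this
    have harith : m + (2 * T + 2) = m + 2 * T + 2 := by ring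
    rw [harith] at this
    omega
  · rcases Nat.lt_or_ge L 3 with hL3 | hL3
    · -- L = 1
      have hLeq : L = 1 := by
        obtain ⟨c, hc⟩ := hod; omega
      have hT0 : T = 0 := by omega
      have p1 := ht_periodic s m
      have p2 := ht_periodic s (m + 1)
      rw [← hD, ← hu, hLeq] at p1 p2
      have hfar' : u m + 2 ≤ u (m + 2) := by
        have : m + 2 * T + 2 = m + 2 := by omega
        rwa [this] at hfar
      have e1 : m + 1 + 1 = m + 2 := by ring
      rw [e1] at p2
      omega
    · -- L odd, L ≥ 3 : 2T + 2 = L - 1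
      have h2T : 2 * T + 2 + 1 = L := by
        obtain ⟨c, hc⟩ := hod; omega
      have p := ht_periodic s m
      rw [← hD, ← hu] at p
      have harith : m + L = (m + 2 * T + 2) + 1 := by omega
      rw [harith] at p
      have hstep : u ((m + 2 * T + 2) + 1) =
          u (m + 2 * T + 2) + 1 - 2 * s ((m + 2 * T + 2 : ℕ) : ZMod L) := by
        rw [hu]; rfl
      rcases hs ((m + 2 * T + 2 : ℕ) : ZMod L) with hz | hz <;> rw [hz] at hstep <;> omega
end

section
/- Rule 184 on a cycle eventually eliminates all 11 pairs if density is below 1/2: if s is a cyclic binary string of length L with more zeros than ones, then after at most ⌊(L−2)/2⌋ iterations of R184 the resulting string contains no adjacent pair 11. -/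
namespace Rule184Aux

variable {L : ℕ}

/-- flux through the edge (i-1, i) -/
def J (u : ZMod L → ℤ) (i : ZMod L) : ℤ := u (i - 1) * (1 - u i)

lemma R184_eq (u : ZMod L → ℤ) (i : ZMod L) :
    R184 u i = u i + J u i - J u (i + 1) := by
  have h : i + 1 - 1 = i := by ring
  simp only [R184, J, h]
  ring

lemma R184_01 (u : ZMod L → ℤ) (hu : ∀ i, u i = 0 ∨ u i = 1) (i : ZMod L) :
    R184 u i = 0 ∨ R184 u i = 1 := by
  unfold R184
  rcases hu (i-1) with h1|h1 <;> rcases hu i with h2|h2 <;> rcases hu (i+1) with h3|h3 <;>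
    rw [h1, h2, h3] <;> norm_num

lemma step_pair (u : ZMod L → ℤ) (hu : ∀ i, u i = 0 ∨ u i = 1) (i : ZMod L)
    (h1 : R184 u i = 1) (h2 : R184 u (i + 1) = 1) :
    u (i + 1) = 1 ∧ u (i + 2) = 1 := by
  have k1 : i + 1 - 1 = i := by ring
  have k2 : i + 1 + 1 = i + 2 := by ring
  rw [R184, k1, k2] at h2
  rw [R184] at h1
  rcases hu (i-1) with a|a <;> rcases hu i with b|b <;> rcases hu (i+1) with c|c <;>
    rcases hu (i+2) with d|d <;> simp only [a, b, c, d] at h1 h2 <;>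
    omega

lemma telescope (u : ZMod L → ℤ) (a : ZMod L) (m : ℕ) :
    ∑ j ∈ Finset.range m, R184 u (a + (j : ZMod L)) =
    (∑ j ∈ Finset.range m, u (a + (j : ZMod L))) + J u a - J u (a + (m : ZMod L)) := by
  have h : ∀ j : ℕ, R184 u (a + (j : ZMod L)) =
      u (a + (j : ZMod L)) + (J u (a + (j : ZMod L)) - J u (a + ((j+1 : ℕ) : ZMod L))) := by
    intro j
    have : a + ((j+1 : ℕ) : ZMod L) = (a + (j : ZMod L)) + 1 := by push_cast; ring
    rw [this, R184_eq]
    ring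
  calc ∑ j ∈ Finset.range m, R184 u (a + (j : ZMod L))
      = ∑ j ∈ Finset.range m,
          (u (a + (j : ZMod L)) + (J u (a + (j : ZMod L)) - J u (a + ((j+1 : ℕ) : ZMod L)))) :=
        Finset.sum_congr rfl (fun j _ => h j)
    _ = (∑ j ∈ Finset.range m, u (a + (j : ZMod L))) +
          ∑ j ∈ Finset.range m,
            (J u (a + (j : ZMod L)) - J u (a + ((j+1 : ℕ) : ZMod L))) := by
        rw [Finset.sum_add_distrib]
    _ = _ := by
        rw [Finset.sum_range_sub' (fun j : ℕ => J u (a + (j : ZMod L))) m]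
        simp only [Nat.cast_zero, add_zero]
        ring

lemma key (T : ℕ) : ∀ (u : ZMod L → ℤ), (∀ i, u i = 0 ∨ u i = 1) → ∀ p : ZMod L,
    (R184^[T] u) p = 1 → (R184^[T] u) (p + 1) = 1 →
    u (p + (T : ZMod L)) = 1 ∧ u (p + (T : ZMod L) + 1) = 1 ∧
      ((T : ℤ) + 2) ≤ ∑ j ∈ Finset.range (2 * T + 2), u (p - (T : ZMod L) + (j : ZMod L)) := by
  induction T with
  | zero =>
      intro u hu p h1 h2
      simp only [Function.iterate_zero, id_eq] at h1 h2
      refine ⟨by simpa using h1, by simpa using h2, ?_⟩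
      have e0 : p - ((0:ℕ) : ZMod L) + ((0:ℕ) : ZMod L) = p := by push_cast; ring
      have e1 : p - ((0:ℕ) : ZMod L) + ((1:ℕ) : ZMod L) = p + 1 := by push_cast; ring
      rw [show 2*0+2 = 2 from rfl, Finset.sum_range_succ, Finset.sum_range_one, e0, e1, h1, h2]
      norm_num
  | succ T ih =>
      intro u hu p h1 h2
      rw [Function.iterate_succ_apply] at h1 h2
      obtain ⟨ha, hb, hsum⟩ := ih (R184 u) (R184_01 u hu) p h1 h2
      obtain ⟨c1, c2⟩ := step_pair u hu (p + (T : ZMod L)) ha hb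
      have eT : ((T+1 : ℕ) : ZMod L) = (T : ZMod L) + 1 := by push_cast; ring
      refine ⟨by rw [eT, ← add_assoc]; exact c1, ?_, ?_⟩
      · rw [eT]
        have : p + ((T : ZMod L) + 1) + 1 = p + (T : ZMod L) + 2 := by ring
        rw [this]; exact c2
      · -- window sum
        set a : ZMod L := p - (T : ZMod L) - 1 with ha'
        have ea : p - ((T+1 : ℕ) : ZMod L) = a := by rw [eT]; ring
        rw [ea]
        have hm : 2 * (T+1) + 2 = (2*T+3) + 1 := by ring
        rw [hm, Finset.sum_range_succ, Finset.sum_range_succ']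
        have e1 : a + ((2*T+3 : ℕ) : ZMod L) = p + (T : ZMod L) + 2 := by
          rw [ha']; push_cast; ring
        have e2 : ∀ j : ℕ, a + ((j+1 : ℕ) : ZMod L) = p - (T : ZMod L) + (j : ZMod L) := by
          intro j; rw [ha']; push_cast; ring
        have e3 : a + ((0:ℕ) : ZMod L) = a := by push_cast; ring
        rw [e1, e3, c2]
        have hmid : ∑ j ∈ Finset.range (2*T+2), u (a + ((j+1:ℕ) : ZMod L)) =
            ∑ j ∈ Finset.range (2*T+2), u (p - (T : ZMod L) + (j : ZMod L)) :=
          Finset.sum_congr rfl (fun j _ => by rw [e2 j])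
        rw [hmid]
        have htel := telescope u (p - (T : ZMod L)) (2*T+2)
        have e4 : p - (T : ZMod L) + ((2*T+2 : ℕ) : ZMod L) = p + (T : ZMod L) + 2 := by
          push_cast; ring
        rw [e4] at htel
        have hJr : J u (p + (T : ZMod L) + 2) = 0 := by
          have e5 : p + (T : ZMod L) + 2 - 1 = p + (T : ZMod L) + 1 := by ring
          rw [J, e5, c1, c2]; ring
        rw [hJr] at htel
        have hJl : J u (p - (T : ZMod L)) = u a * (1 - u (p - (T : ZMod L))) := by
          rw [J, ha']
        have h01a := hu a
        have h01b := hu (p - (T : ZMod L))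
        have hs' : ((T:ℤ) + 2) ≤ ∑ j ∈ Finset.range (2*T+2),
            R184 u (p - (T : ZMod L) + (j : ZMod L)) := hsum
        push_cast
        rw [htel, hJl] at hs'
        rcases h01a with x|x <;> rcases h01b with y|y <;> rw [x, y] at hs' <;> rw [x] <;>
          norm_num at hs' <;> linarith

end Rule184Aux

/-- If a cyclic string has more zeros than ones, after ⌊(L-2)/2⌋ iterations of
rule 184 there is no adjacent 11 pair. -/
theorem rule184_eliminates_11 (L : ℕ) [NeZero L]
    (s : ZMod L → ℤ) (hs : ∀ i, s i = 0 ∨ s i = 1)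
    (hρ : 2 * ∑ i : ZMod L, s i < (L : ℤ)) :
    ∀ i, ¬ ((R184^[(L - 2) / 2] s) i = 1 ∧ (R184^[(L - 2) / 2] s) (i + 1) = 1) := by
  intro i hpair
  obtain ⟨h1, h2⟩ := hpair
  set T : ℕ := (L - 2) / 2 with hT
  obtain ⟨-, -, hsum⟩ := Rule184Aux.key T s hs i h1 h2
  have hL1 : 1 ≤ L := Nat.pos_of_ne_zero (NeZero.ne L)
  rcases eq_or_lt_of_le hL1 with hL | hL2
  · -- L = 1
    have hL1' : L = 1 := hL.symm
    subst hL1'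
    have hT0 : T = 0 := by simp [hT]
    rw [hT0] at hsum
    rw [show 2*0+2 = 2 from rfl, Finset.sum_range_succ, Finset.sum_range_one] at hsum
    have e : ∀ j : ZMod 1, i - ((0:ℕ) : ZMod 1) + j = i := fun j => Subsingleton.elim _ _
    rw [e, e] at hsum
    have htot : ∑ k : ZMod 1, s k = s i := Fintype.sum_subsingleton _ i
    rw [htot] at hρ
    norm_num at hsum hρ
    linarith
  · -- 2 ≤ L
    have hm : 2 * T + 2 ≤ L := by omega
    have hinj : ∀ x ∈ Finset.range (2*T+2), ∀ y ∈ Finset.range (2*T+2),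
        i - (T : ZMod L) + (x : ZMod L) = i - (T : ZMod L) + (y : ZMod L) → x = y := by
      intro x hx y hy hxy
      have hx' : x < L := by simp at hx; omega
      have hy' : y < L := by simp at hy; omega
      have : (x : ZMod L) = (y : ZMod L) := by
        exact add_left_cancel hxy
      have := congrArg ZMod.val this
      rwa [ZMod.val_cast_of_lt hx', ZMod.val_cast_of_lt hy'] at this
    have hle : ∑ j ∈ Finset.range (2*T+2), s (i - (T : ZMod L) + (j : ZMod L)) ≤
        ∑ k : ZMod L, s k := by
      rw [← Finset.sum_image hinj]
      apply Finset.sum_le_sum_of_subset_of_nonneg (Finset.subset_univ _)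
      intro k _ _
      rcases hs k with h|h <;> rw [h] <;> norm_num
    have hLT : (L : ℤ) ≤ 2 * (T : ℤ) + 3 := by
      have : L ≤ 2*T + 3 := by omega
      exact_mod_cast this
    linarith
end

section
/- If a cyclic binary string s of length L contains no adjacent pair 11, then after at most ⌊(L−1)/2⌋ iterations of majority rule 232, the string becomes all zeros, provided s has strictly fewer ones than zeros. -/
/-- Majority of three binary values. -/
def maj (a b c : ℤ) : ℤ := if 2 ≤ a + b + c then 1 else 0

/-- Rule 232 (majority rule) on a cyclic string. -/
def R232 {L : ℕ} (s : ZMod L → ℤ) (i : ZMod L) : ℤ :=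
  maj (s (i - 1)) (s i) (s (i + 1))

section aux

variable {L : ℕ}

lemma R232_vals (s : ZMod L → ℤ) (hs : ∀ i, s i = 0 ∨ s i = 1) (i : ZMod L) :
    R232 s i = 0 ∨ R232 s i = 1 := by
  unfold R232 maj
  split <;> simp

lemma R232_one_iff (s : ZMod L → ℤ) (hs : ∀ i, s i = 0 ∨ s i = 1)
    (h11 : ¬ ∃ i, s i = 1 ∧ s (i + 1) = 1) (i : ZMod L) :
    R232 s i = 1 ↔ s (i - 1) = 1 ∧ s i = 0 ∧ s (i + 1) = 1 := by
  have h1 : ¬ (s (i - 1) = 1 ∧ s i = 1) := by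
    intro h; exact h11 ⟨i - 1, h.1, by rw [sub_add_cancel]; exact h.2⟩
  have h2 : ¬ (s i = 1 ∧ s (i + 1) = 1) := fun h => h11 ⟨i, h⟩
  unfold R232 maj
  rcases hs (i - 1) with ha | ha <;> rcases hs i with hb | hb <;>
    rcases hs (i + 1) with hc | hc <;>
    simp [ha, hb, hc] at h1 h2 ⊢ <;> omega

lemma R232_no11 (s : ZMod L → ℤ) (hs : ∀ i, s i = 0 ∨ s i = 1)
    (h11 : ¬ ∃ i, s i = 1 ∧ s (i + 1) = 1) :
    ¬ ∃ i, R232 s i = 1 ∧ R232 s (i + 1) = 1 := by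
  rintro ⟨i, h1, h2⟩
  rw [R232_one_iff s hs h11] at h1 h2
  rw [add_sub_cancel_right] at h2
  exact absurd h2.1 (by rw [h1.2.1]; norm_num)

variable [NeZero L]

/-- number of ones -/
def ones (s : ZMod L → ℤ) : Finset (ZMod L) := Finset.univ.filter (fun i => s i = 1)

lemma sum_eq_card (s : ZMod L → ℤ) (hs : ∀ i, s i = 0 ∨ s i = 1) :
    ∑ i : ZMod L, s i = ((ones s).card : ℤ) := by
  unfold ones
  rw [Finset.card_filter]
  push_cast
  apply Finset.sum_congr rfl
  intro i _
  rcases hs i with h | h <;> simp [h]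

lemma exists_escape (s : ZMod L → ℤ) (hs : ∀ i, s i = 0 ∨ s i = 1)
    (h11 : ¬ ∃ i, s i = 1 ∧ s (i + 1) = 1)
    (hρ : 2 * ∑ i : ZMod L, s i < (L : ℤ))
    (j₀ : ZMod L) (hj₀ : s j₀ = 1) :
    ∃ j, s j = 1 ∧ s (j - 2) = 0 := by
  by_contra hcon
  push_neg at hcon
  have hstep : ∀ x : ZMod L, s x = 1 → s (x - 2) = 1 := by
    intro x hx
    rcases hs (x - 2) with h | h
    · exact absurd h (hcon x hx)
    · exact h
  have hprev : ∀ x : ZMod L, s x = 1 → s (x - 1) = 0 := by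
    intro x hx
    rcases hs (x - 1) with h | h
    · exact h
    · exact absurd (⟨x - 1, h, by rwa [sub_add_cancel]⟩ : ∃ i, s i = 1 ∧ s (i+1) = 1) h11
  have key : ∀ k : ℕ, s (j₀ - (2 * k : ℕ)) = 1 ∧ s (j₀ - (2 * k + 1 : ℕ)) = 0 := by
    intro k
    induction k with
    | zero => simpa using ⟨hj₀, hprev j₀ hj₀⟩
    | succ k ih =>
      have h1 : s (j₀ - (2 * (k + 1) : ℕ)) = 1 := by
        have := hstep _ ih.1
        convert this using 2
        push_cast
        ring
      refine ⟨h1, ?_⟩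
      have := hprev _ h1
      convert this using 2
      push_cast
      ring
  have keyall : ∀ k : ℕ, s (j₀ - (k : ℕ)) = (if Even k then 1 else 0) := by
    intro k
    rcases Nat.even_or_odd k with ⟨m, hm⟩ | ⟨m, hm⟩
    · subst hm
      rw [if_pos ⟨m, rfl⟩, ← two_mul]
      exact (key m).1
    · subst hm
      rw [if_neg (Nat.not_even_iff_odd.mpr ⟨m, rfl⟩)]
      exact (key m).2
  -- now compute the sum
  have h1 : ∑ i : ZMod L, s i = ∑ i : ZMod L, s (j₀ - i) :=
    (Fintype.sum_equiv (Equiv.subLeft j₀) (fun i => s (j₀ - i)) s (fun _ => rfl)).symm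
  have h2 : ∑ i : ZMod L, s (j₀ - i) = ∑ k ∈ Finset.range L, s (j₀ - (k : ℕ)) := by
    refine Finset.sum_nbij' (fun (i : ZMod L) => i.val) (fun (k : ℕ) => (k : ZMod L))
      ?_ ?_ ?_ ?_ ?_
    · intro i _; exact Finset.mem_range.mpr i.val_lt
    · intro k _; exact Finset.mem_univ _
    · intro i _; exact ZMod.natCast_zmod_val i
    · intro k hk; exact ZMod.val_natCast_of_lt (Finset.mem_range.mp hk)
    · intro i _; rw [ZMod.natCast_zmod_val]
  have hsum : ∑ i : ZMod L, s i = ∑ k ∈ Finset.range L, (if Even k then (1:ℤ) else 0) := by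
    rw [h1, h2]
    exact Finset.sum_congr rfl (fun k _ => keyall k)
  have evensum : ∀ n : ℕ, (n : ℤ) ≤ 2 * ∑ k ∈ Finset.range n, (if Even k then (1:ℤ) else 0) := by
    intro n
    induction n with
    | zero => simp
    | succ n ih =>
      rw [Finset.sum_range_succ]
      rcases Nat.even_or_odd n with h | h
      · rw [if_pos h]; push_cast; linarith
      · rw [if_neg (Nat.not_even_iff_odd.mpr h)]
        obtain ⟨m, hm⟩ := h
        have h2 : ∀ S : ℤ, (n:ℤ) ≤ 2 * S → (n:ℤ) + 1 ≤ 2 * S := by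
          intro S hS; omega
        push_cast
        linarith [h2 _ ih]
  rw [hsum] at hρ
  linarith [evensum L]

lemma card_decrease (s : ZMod L → ℤ) (hs : ∀ i, s i = 0 ∨ s i = 1)
    (h11 : ¬ ∃ i, s i = 1 ∧ s (i + 1) = 1)
    (hρ : 2 * ∑ i : ZMod L, s i < (L : ℤ))
    (j₀ : ZMod L) (hj₀ : s j₀ = 1) :
    (ones (R232 s)).card < (ones s).card := by
  obtain ⟨j, hj1, hj2⟩ := exists_escape s hs h11 hρ j₀ hj₀
  have hsub : (ones (R232 s)).image (· + 1) ⊂ ones s := by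
    constructor
    · intro x hx
      simp only [Finset.mem_image] at hx
      obtain ⟨i, hi, rfl⟩ := hx
      simp only [ones, Finset.mem_filter, Finset.mem_univ, true_and] at hi ⊢
      exact ((R232_one_iff s hs h11 i).mp hi).2.2
    · intro hsup
      have hj : j ∈ ones s := by simp [ones, hj1]
      have := hsup hj
      simp only [Finset.mem_image] at this
      obtain ⟨i, hi, hieq⟩ := this
      simp only [ones, Finset.mem_filter, Finset.mem_univ, true_and] at hi
      have h := (R232_one_iff s hs h11 i).mp hi
      have : i - 1 = j - 2 := by rw [← hieq]; ring
      rw [this, hj2] at h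
      exact absurd h.1 (by norm_num)
  calc (ones (R232 s)).card = ((ones (R232 s)).image (· + 1)).card := by
        rw [Finset.card_image_of_injective _ (add_left_injective 1)]
    _ < (ones s).card := Finset.card_lt_card hsub

lemma R232_zero : R232 (fun _ : ZMod L => (0:ℤ)) = fun _ => 0 := by
  funext i
  unfold R232 maj
  norm_num

lemma sum_pres (s : ZMod L → ℤ) (hs : ∀ i, s i = 0 ∨ s i = 1) :
    ∀ n, (∑ i : ZMod L, s i ≤ 0) → R232^[n] s = fun _ => 0 := by
  intro n hsum
  have hz : s = fun _ => 0 := by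
    funext i
    rcases hs i with h | h
    · exact h
    · exfalso
      have h1 : (1:ℤ) ≤ ∑ i : ZMod L, s i := by
        rw [← h]
        apply Finset.single_le_sum (fun j _ => ?_) (Finset.mem_univ i)
        rcases hs j with hj | hj <;> simp [hj]
      linarith
  rw [hz]
  exact Function.iterate_fixed R232_zero n

lemma main_iter : ∀ n : ℕ, ∀ s : ZMod L → ℤ, (∀ i, s i = 0 ∨ s i = 1) →
    (¬ ∃ i, s i = 1 ∧ s (i + 1) = 1) →
    2 * ∑ i : ZMod L, s i < (L : ℤ) →
    (∑ i : ZMod L, s i ≤ n) →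
    R232^[n] s = fun _ => 0 := by
  intro n
  induction n with
  | zero =>
    intro s hs h11 hρ hle
    exact sum_pres s hs 0 (by exact_mod_cast hle)
  | succ n ih =>
    intro s hs h11 hρ hle
    by_cases hz : ∑ i : ZMod L, s i ≤ 0
    · exact sum_pres s hs (n+1) hz
    · push_neg at hz
      -- there's a one
      have hone : ∃ j, s j = 1 := by
        by_contra hno
        push_neg at hno
        have : ∑ i : ZMod L, s i = 0 := Finset.sum_eq_zero (fun i _ => by
          rcases hs i with h | h
          · exact h
          · exact absurd h (hno i))
        linarith
      obtain ⟨j, hj⟩ := hone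
      have hdec := card_decrease s hs h11 hρ j hj
      have hs' := R232_vals s hs
      have h11' := R232_no11 s hs h11
      have hsum' : ∑ i : ZMod L, R232 s i = ((ones (R232 s)).card : ℤ) :=
        sum_eq_card _ hs'
      have hsum : ∑ i : ZMod L, s i = ((ones s).card : ℤ) := sum_eq_card _ hs
      have hlt : ∑ i : ZMod L, R232 s i < ∑ i : ZMod L, s i := by
        rw [hsum', hsum]; exact_mod_cast hdec
      rw [Function.iterate_succ_apply]
      exact ih (R232 s) hs' h11' (by linarith) (by push_cast at hle ⊢; linarith)

end aux

/-- Without 11 pairs and with fewer ones than zeros, ⌊(L-1)/2⌋ iterations of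
rule 232 yield the all-zeros configuration. -/
theorem rule232_converges_to_zeros (L : ℕ) [NeZero L]
    (s : ZMod L → ℤ) (hs : ∀ i, s i = 0 ∨ s i = 1)
    (h11 : ¬ ∃ i, s i = 1 ∧ s (i + 1) = 1)
    (hρ : 2 * ∑ i : ZMod L, s i < (L : ℤ)) :
    R232^[(L - 1) / 2] s = fun _ => 0 := by
  apply main_iter _ s hs h11 hρ
  have hc := sum_eq_card s hs
  rw [hc] at hρ ⊢
  have h2 : 2 * (ones s).card < L := by exact_mod_cast hρ
  have h3 : (ones s).card ≤ (L - 1) / 2 := by omega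
  exact_mod_cast h3
end

section
/- One-dimensional density classification (Fukś 1997): for a cyclic binary string s of length L with density ρ = (∑ s_i)/L, setting n = ⌊(L−2)/2⌋ and m = ⌊(L−1)/2⌋, the string R232^m(R184^n(s)) is all zeros if ρ < 1/2, all ones if ρ > 1/2, and alternating 0101… if ρ = 1/2. -/
namespace DC

def R184Z (f : ℤ → ℤ) (i : ℤ) : ℤ :=
  f (i - 1) + f i * f (i + 1) - f (i - 1) * f i

def R232Z (f : ℤ → ℤ) (i : ℤ) : ℤ := maj (f (i - 1)) (f i) (f (i + 1))

def Bin (f : ℤ → ℤ) : Prop := ∀ i, f i = 0 ∨ f i = 1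

lemma Icc_top (a b : ℤ) (h : a ≤ b + 1) :
    Finset.Icc a (b+1) = insert (b+1) (Finset.Icc a b) := by
  ext x; simp [Finset.mem_Icc, Finset.mem_insert]; omega

lemma Icc_bot (a b : ℤ) (h : a - 1 ≤ b) :
    Finset.Icc (a-1) b = insert (a-1) (Finset.Icc a b) := by
  ext x; simp [Finset.mem_Icc, Finset.mem_insert]; omega

lemma tele (G : ℤ → ℤ) (a b : ℤ) (hb : a ≤ b) :
    ∑ j ∈ Finset.Icc a b, (G (j-1) - G j) = G (a-1) - G b := by
  refine Int.le_induction (motive := fun b _ => ∑ j ∈ Finset.Icc a b, (G (j-1) - G j) = G (a-1) - G b)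
    ?_ ?_ b hb
  · simp
  · intro b hb ih
    rw [Icc_top a b (by omega), Finset.sum_insert (by simp [Finset.mem_Icc]), ih]
    ring

lemma sum_Icc_extend (f : ℤ → ℤ) (a b : ℤ) (h : a ≤ b) :
    ∑ j ∈ Finset.Icc (a-1) (b+1), f j
      = f (a-1) + (∑ j ∈ Finset.Icc a b, f j) + f (b+1) := by
  rw [Icc_top (a-1) b (by omega), Finset.sum_insert (by simp [Finset.mem_Icc]),
    Icc_bot a b (by omega), Finset.sum_insert (by simp [Finset.mem_Icc])]
  ring

lemma Icc_pair (i : ℤ) : Finset.Icc i (i+1) = {i, i+1} := by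
  ext x; simp [Finset.mem_Icc]; omega

lemma flow184 (f : ℤ → ℤ) (a b : ℤ) (h : a ≤ b) :
    ∑ j ∈ Finset.Icc a b, R184Z f j
      = (∑ j ∈ Finset.Icc a b, f j)
        + ((f (a-1) - f (a-1) * f a) - (f b - f b * f (b+1))) := by
  have key : ∀ j : ℤ, R184Z f j
      = f j + ((fun p => f p - f p * f (p+1)) (j-1) - (fun p => f p - f p * f (p+1)) j) := by
    intro j
    simp only
    rw [show j - 1 + 1 = j from by ring]
    unfold R184Z; ring
  rw [Finset.sum_congr rfl fun j _ => key j, Finset.sum_add_distrib,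
    tele (fun p => f p - f p * f (p+1)) a b h, show a - 1 + 1 = a from by ring]

lemma bin_R184Z {f : ℤ → ℤ} (hf : Bin f) : Bin (R184Z f) := by
  intro i
  have h1 := hf (i-1); have h2 := hf i; have h3 := hf (i+1)
  unfold R184Z
  rcases h1 with h1|h1 <;> rcases h2 with h2|h2 <;> rcases h3 with h3|h3 <;>
    rw [h1, h2, h3] <;> norm_num

lemma step184_ones {f : ℤ → ℤ} (hf : Bin f) {p : ℤ}
    (h1 : R184Z f p = 1) (h2 : R184Z f (p+1) = 1) :
    f (p+1) = 1 ∧ f (p+2) = 1 := by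
  unfold R184Z at h1 h2
  rw [show p + 1 - 1 = p from by ring, show p + 1 + 1 = p + 2 from by ring] at h2
  have e1 := hf (p-1); have e2 := hf p; have e3 := hf (p+1); have e4 := hf (p+2)
  rcases e1 with e1|e1 <;> rcases e2 with e2|e2 <;> rcases e3 with e3|e3 <;>
    rcases e4 with e4|e4 <;> simp only [e1, e2, e3, e4] at h1 h2 <;>
    omega

lemma step184_zeros {f : ℤ → ℤ} (hf : Bin f) {p : ℤ}
    (h1 : R184Z f p = 0) (h2 : R184Z f (p+1) = 0) :
    f (p-1) = 0 ∧ f p = 0 := by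
  unfold R184Z at h1 h2
  rw [show p + 1 - 1 = p from by ring, show p + 1 + 1 = p + 2 from by ring] at h2
  have e1 := hf (p-1); have e2 := hf p; have e3 := hf (p+1); have e4 := hf (p+2)
  rcases e1 with e1|e1 <;> rcases e2 with e2|e2 <;> rcases e3 with e3|e3 <;>
    rcases e4 with e4|e4 <;> simp only [e1, e2, e3, e4] at h1 h2 <;>
    omega

lemma jamA : ∀ (t : ℕ) (f : ℤ → ℤ), Bin f → ∀ i : ℤ,
    R184Z^[t] f i = 1 → R184Z^[t] f (i+1) = 1 →
    f (i + t) = 1 ∧ f (i + t + 1) = 1 ∧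
      ((t : ℤ) + 2) ≤ ∑ j ∈ Finset.Icc (i - t) (i + t + 1), f j := by
  intro t
  induction t with
  | zero =>
      intro f hf i h1 h2
      simp only [Function.iterate_zero, id_eq] at h1 h2
      push_cast
      refine ⟨by simpa using h1, by simpa using h2, ?_⟩
      rw [show i - 0 = i from by ring, show i + 0 + 1 = i + 1 from by ring,
        Icc_pair i, Finset.sum_pair (by omega)]
      omega
  | succ t ih =>
      intro f hf i h1 h2
      rw [Function.iterate_succ_apply] at h1 h2
      obtain ⟨hu1, hu2, hsum⟩ := ih (R184Z f) (bin_R184Z hf) i h1 h2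
      obtain ⟨hf1, hf2⟩ := step184_ones hf hu1 hu2
      push_cast
      refine ⟨by rwa [show i + ((t:ℤ)+1) = i + t + 1 from by ring],
        by rwa [show i + ((t:ℤ)+1) + 1 = i + t + 2 from by ring], ?_⟩
      have hab : i - (t:ℤ) ≤ i + t + 1 := by omega
      have hext := sum_Icc_extend f (i - t) (i + t + 1) hab
      have hflow := flow184 f (i - t) (i + t + 1) hab
      have e1 := hf (i - t - 1); have e2 := hf (i - t)
      rw [show i - ((t:ℤ)+1) = (i - t) - 1 from by ring,
        show i + ((t:ℤ)+1) + 1 = (i + t + 1) + 1 from by ring, hext]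
      rw [show i + (t:ℤ) + 1 + 1 = i + t + 2 from by ring] at hflow ⊢
      rw [hf1, hf2] at hflow
      rw [hf2]
      rcases e1 with e1|e1 <;> rcases e2 with e2|e2 <;>
        rw [e1, e2] at hflow <;> rw [e1] <;> omega

lemma jamA0 : ∀ (t : ℕ) (f : ℤ → ℤ), Bin f → ∀ i : ℤ,
    R184Z^[t] f i = 0 → R184Z^[t] f (i+1) = 0 →
    f (i - t) = 0 ∧ f (i - t + 1) = 0 ∧
      (∑ j ∈ Finset.Icc (i - t) (i + t + 1), f j) ≤ (t : ℤ) := by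
  intro t
  induction t with
  | zero =>
      intro f hf i h1 h2
      simp only [Function.iterate_zero, id_eq] at h1 h2
      push_cast
      refine ⟨by simpa using h1, by simpa using h2, ?_⟩
      rw [show i - 0 = i from by ring, show i + 0 + 1 = i + 1 from by ring,
        Icc_pair i, Finset.sum_pair (by omega)]
      omega
  | succ t ih =>
      intro f hf i h1 h2
      rw [Function.iterate_succ_apply] at h1 h2
      obtain ⟨hu1, hu2, hsum⟩ := ih (R184Z f) (bin_R184Z hf) i h1 h2
      obtain ⟨hf1, hf2⟩ := step184_zeros hf (p := i - t) (by rwa [show (i:ℤ) - t = i - t from rfl] at hu1)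
        (by rwa [show i - (t:ℤ) + 1 = (i - t) + 1 from by ring] at hu2)
      push_cast
      refine ⟨by rwa [show i - ((t:ℤ)+1) = (i - t) - 1 from by ring],
        by rwa [show i - ((t:ℤ)+1) + 1 = i - t from by ring], ?_⟩
      have hab : i - (t:ℤ) ≤ i + t + 1 := by omega
      have hext := sum_Icc_extend f (i - t) (i + t + 1) hab
      have hflow := flow184 f (i - t) (i + t + 1) hab
      have e3 := hf (i + t + 1); have e4 := hf (i + t + 2)
      rw [show i - ((t:ℤ)+1) = (i - t) - 1 from by ring,
        show i + ((t:ℤ)+1) + 1 = (i + t + 1) + 1 from by ring, hext]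
      rw [show i + (t:ℤ) + 1 + 1 = i + t + 2 from by ring] at hflow ⊢
      rw [hf1, hf2] at hflow
      rw [hf1]
      rcases e3 with e3|e3 <;> rcases e4 with e4|e4 <;>
        rw [e3, e4] at hflow <;> rw [e4] <;> omega

def No11 (f : ℤ → ℤ) : Prop := ∀ j : ℤ, ¬(f j = 1 ∧ f (j+1) = 1)

lemma bin_R232Z {f : ℤ → ℤ} : Bin (R232Z f) := by
  intro i; unfold R232Z maj; split_ifs <;> simp

lemma step232_one {f : ℤ → ℤ} (hf : Bin f) (h11 : No11 f) {j : ℤ}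
    (h : R232Z f j = 1) : f (j-1) = 1 ∧ f (j+1) = 1 := by
  unfold R232Z maj at h
  have hge : 2 ≤ f (j-1) + f j + f (j+1) := by
    by_contra hc; rw [if_neg hc] at h; exact absurd h (by norm_num)
  have e1 := hf (j-1); have e2 := hf j; have e3 := hf (j+1)
  have hj : f j = 0 := by
    rcases e2 with e2|e2
    · exact e2
    · exfalso
      have hl := h11 (j-1)
      have hr := h11 j
      rw [show j - 1 + 1 = j from by ring] at hl
      rcases e1 with e1|e1
      · rcases e3 with e3|e3 <;> omega
      · exact hl ⟨e1, e2⟩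
  omega

lemma no11_R232Z {f : ℤ → ℤ} (hf : Bin f) (h11 : No11 f) : No11 (R232Z f) := by
  intro j ⟨h1, h2⟩
  obtain ⟨ha, hb⟩ := step232_one hf h11 h1
  obtain ⟨hc, hd⟩ := step232_one hf h11 h2
  rw [show j + 1 - 1 = j from by ring] at hc
  exact h11 j ⟨hc, hb⟩

lemma jamD : ∀ (t : ℕ) (f : ℤ → ℤ), Bin f → No11 f → ∀ i : ℤ,
    R232Z^[t] f i = 1 → ∀ k : ℕ, k ≤ t → f (i - t + 2*k) = 1 := by
  intro t
  induction t with
  | zero =>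
      intro f hf h11 i h1 k hk
      interval_cases k
      simpa using h1
  | succ t ih =>
      intro f hf h11 i h1 k hk
      rw [Function.iterate_succ_apply] at h1
      have ihu := ih (R232Z f) bin_R232Z (no11_R232Z hf h11) i h1
      rcases Nat.lt_or_ge k (t+1) with hk'|hk'
      · have hu := ihu k (by omega)
        obtain ⟨ha, _⟩ := step232_one hf h11 hu
        rw [show i - (t:ℤ) + 2*k - 1 = i - (↑t+1) + 2*k from by ring] at ha
        rw [show ((t:ℕ)+1 : ℕ) = t + 1 from rfl]
        push_cast
        exact ha
      · have hkt : k = t + 1 := by omega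
        subst hkt
        have hu := ihu t (by omega)
        obtain ⟨_, hb⟩ := step232_one hf h11 hu
        rw [show i - (t:ℤ) + 2*t + 1 = i - (↑t+1) + 2*(↑t+1) from by ring] at hb
        push_cast
        exact hb

lemma sum_ge_of_ones (f : ℤ → ℤ) (hf : Bin f) (t : ℕ) (x : ℤ)
    (h : ∀ k : ℕ, k ≤ t → f (x - t + 2*k) = 1) :
    (t : ℤ) + 1 ≤ ∑ j ∈ Finset.Icc (x - t) (x + t), f j := by
  have hinj : ∀ a ∈ Finset.range (t+1), ∀ b ∈ Finset.range (t+1),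
      x - (t:ℤ) + 2*a = x - t + 2*b → a = b := by
    intro a _ b _ hab; omega
  have hsub : (Finset.range (t+1)).image (fun k : ℕ => x - (t:ℤ) + 2*k) ⊆ Finset.Icc (x - t) (x + t) := by
    intro y hy
    simp only [Finset.mem_image, Finset.mem_range] at hy
    obtain ⟨k, hk, rfl⟩ := hy
    simp only [Finset.mem_Icc]
    omega
  have h1 : ∑ y ∈ (Finset.range (t+1)).image (fun k : ℕ => x - (t:ℤ) + 2*k), f y
      = ∑ k ∈ Finset.range (t+1), f (x - t + 2*k) := Finset.sum_image hinj
  have h2 : ∑ k ∈ Finset.range (t+1), f (x - (t:ℤ) + 2*k) = (t:ℤ) + 1 := by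
    rw [Finset.sum_congr rfl fun k hk => h k (by simpa using Nat.lt_succ_iff.mp (Finset.mem_range.mp hk))]
    simp
  calc ((t:ℤ) + 1) = ∑ y ∈ (Finset.range (t+1)).image (fun k : ℕ => x - (t:ℤ) + 2*k), f y := by
        rw [h1, h2]
    _ ≤ ∑ j ∈ Finset.Icc (x - (t:ℤ)) (x + t), f j := by
        refine Finset.sum_le_sum_of_subset_of_nonneg hsub ?_
        intro j _ _
        rcases hf j with h|h <;> omega

variable {L : ℕ}

def BinM (s : ZMod L → ℤ) : Prop := ∀ i, s i = 0 ∨ s i = 1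

lemma bin_R184M {s : ZMod L → ℤ} (hs : BinM s) : BinM (R184 s) := by
  intro i
  have h1 := hs (i-1); have h2 := hs i; have h3 := hs (i+1)
  unfold R184
  rcases h1 with h1|h1 <;> rcases h2 with h2|h2 <;> rcases h3 with h3|h3 <;>
    rw [h1, h2, h3] <;> norm_num

lemma bin_R232M {s : ZMod L → ℤ} : BinM (R232 s) := by
  intro i; unfold R232 maj; split_ifs <;> simp

lemma bin_iter {F : (ZMod L → ℤ) → ZMod L → ℤ} (hF : ∀ u, BinM u → BinM (F u)) :
    ∀ (t : ℕ) (s : ZMod L → ℤ), BinM s → BinM (F^[t] s) := by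
  intro t
  induction t with
  | zero => intro s hs; simpa using hs
  | succ t ih => intro s hs; rw [Function.iterate_succ_apply]; exact ih _ (hF _ hs)

lemma sum_R184 [NeZero L] (s : ZMod L → ℤ) :
    ∑ i : ZMod L, R184 s i = ∑ i : ZMod L, s i := by
  unfold R184
  rw [Finset.sum_sub_distrib, Finset.sum_add_distrib]
  have h1 : ∑ i : ZMod L, s (i - 1) = ∑ i : ZMod L, s i :=
    Fintype.sum_equiv (Equiv.subRight 1) _ _ (fun i => rfl)
  have h2 : ∑ i : ZMod L, s (i-1) * s i = ∑ i : ZMod L, s i * s (i+1) := by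
    refine Fintype.sum_equiv (Equiv.subRight 1) _ _ (fun i => ?_)
    show s (i-1) * s i = s (i-1) * s (i-1+1)
    rw [sub_add_cancel]
  rw [h1, h2]
  ring

lemma sum_R184_iter [NeZero L] (t : ℕ) (s : ZMod L → ℤ) :
    ∑ i : ZMod L, R184^[t] s i = ∑ i : ZMod L, s i := by
  induction t generalizing s with
  | zero => simp
  | succ t ih => rw [Function.iterate_succ_apply, ih (R184 s), sum_R184]

lemma comp184 (s : ZMod L → ℤ) :
    R184Z (fun j : ℤ => s (j : ZMod L)) = fun j : ℤ => R184 s (j : ZMod L) := by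
  funext j
  unfold R184Z R184
  beta_reduce
  have h1 : ((j - 1 : ℤ) : ZMod L) = (j : ZMod L) - 1 := by push_cast; ring
  have h2 : ((j + 1 : ℤ) : ZMod L) = (j : ZMod L) + 1 := by push_cast; ring
  rw [h1, h2]

lemma comp232 (s : ZMod L → ℤ) :
    R232Z (fun j : ℤ => s (j : ZMod L)) = fun j : ℤ => R232 s (j : ZMod L) := by
  funext j
  unfold R232Z R232
  beta_reduce
  have h1 : ((j - 1 : ℤ) : ZMod L) = (j : ZMod L) - 1 := by push_cast; ring
  have h2 : ((j + 1 : ℤ) : ZMod L) = (j : ZMod L) + 1 := by push_cast; ring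
  rw [h1, h2]

lemma iterate_comp {F : (ZMod L → ℤ) → ZMod L → ℤ} {G : (ℤ → ℤ) → ℤ → ℤ}
    (h : ∀ u : ZMod L → ℤ, G (fun j : ℤ => u (j : ZMod L)) = fun j : ℤ => F u (j : ZMod L)) :
    ∀ (t : ℕ) (u : ZMod L → ℤ),
      G^[t] (fun j : ℤ => u (j : ZMod L)) = fun j : ℤ => (F^[t] u) (j : ZMod L) := by
  intro t
  induction t with
  | zero => intro u; simp
  | succ t ih =>
      intro u
      rw [Function.iterate_succ_apply, Function.iterate_succ_apply, h u, ih (F u)]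

lemma cast_win_inj [NeZero L] {x y : ℤ} (h : (x : ZMod L) = y) (hd : |x - y| < L) : x = y := by
  rw [ZMod.intCast_eq_intCast_iff] at h
  obtain ⟨c, hc⟩ := Int.ModEq.dvd h
  have hL : (0:ℤ) < L := by exact_mod_cast Nat.pos_of_ne_zero (NeZero.ne L)
  rcases le_or_gt 1 c with h1 | h1
  · nlinarith [abs_lt.mp hd]
  rcases le_or_gt c (-1) with h2 | h2
  · nlinarith [abs_lt.mp hd]
  · have hc0 : c = 0 := by omega
    rw [hc0, mul_zero] at hc
    omega

lemma sum_window_le [NeZero L] (g : ZMod L → ℤ) (hg : ∀ i, 0 ≤ g i) (a b : ℤ)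
    (hab : a ≤ b) (hlen : b - a < (L:ℤ)) :
    ∑ j ∈ Finset.Icc a b, g (j : ZMod L) ≤ ∑ i : ZMod L, g i := by
  have hinj : ∀ x ∈ Finset.Icc a b, ∀ y ∈ Finset.Icc a b,
      ((x : ZMod L) = (y : ZMod L)) → x = y := by
    intro x hx y hy hxy
    simp only [Finset.mem_Icc] at hx hy
    exact cast_win_inj hxy (by rw [abs_lt]; omega)
  calc ∑ j ∈ Finset.Icc a b, g (j : ZMod L)
      = ∑ i ∈ (Finset.Icc a b).image (fun j : ℤ => (j : ZMod L)), g i :=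
        (Finset.sum_image hinj).symm
    _ ≤ ∑ i : ZMod L, g i :=
        Finset.sum_le_sum_of_subset_of_nonneg (Finset.subset_univ _) (fun i _ _ => hg i)

lemma sum_one_sub_univ [NeZero L] (g : ZMod L → ℤ) :
    ∑ i : ZMod L, (1 - g i) = (L : ℤ) - ∑ i : ZMod L, g i := by
  rw [Finset.sum_sub_distrib, Finset.sum_const, Finset.card_univ, ZMod.card,
    nsmul_eq_mul, mul_one]

lemma phase2_zero [NeZero L] (g : ZMod L → ℤ) (hb : BinM g)
    (h11 : ∀ i : ZMod L, ¬(g i = 1 ∧ g (i+1) = 1)) (m : ℕ)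
    (hm : 2*m + 1 ≤ L) (hS : ∑ i : ZMod L, g i ≤ (m:ℤ)) :
    R232^[m] g = fun _ => 0 := by
  funext i
  have hbin' : BinM (R232^[m] g) := bin_iter (fun u _ => bin_R232M) m g hb
  rcases hbin' i with h0|h1
  · exact h0
  exfalso
  have hx : (((i.val : ℤ)) : ZMod L) = i := by
    rw [Int.cast_natCast]; exact ZMod.natCast_rightInverse i
  set x : ℤ := (i.val : ℤ)
  have hcomp := iterate_comp (F := R232 (L := L)) (G := R232Z) comp232 m g
  have hfx : R232Z^[m] (fun j : ℤ => g (j : ZMod L)) x = 1 := by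
    rw [hcomp]
    show R232^[m] g ((x : ZMod L)) = 1
    rw [hx]; exact h1
  have hbZ : Bin (fun j : ℤ => g (j:ZMod L)) := fun j => hb _
  have h11Z : No11 (fun j : ℤ => g (j:ZMod L)) := by
    intro j hj
    obtain ⟨ha, hb'⟩ := hj
    have hc : ((j+1 : ℤ) : ZMod L) = (j : ZMod L) + 1 := by push_cast; ring
    refine h11 (j : ZMod L) ⟨ha, ?_⟩
    show g ((j : ZMod L) + 1) = 1
    rw [← hc]
    exact hb'
  have hones := jamD m _ hbZ h11Z x hfx
  have hge := sum_ge_of_ones _ hbZ m x hones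
  have hle := sum_window_le g (fun i => by rcases hb i with h|h <;> omega)
    (x - m) (x + m) (by omega) (by omega)
  omega

lemma c232 (g : ZMod L → ℤ) (hb : BinM g) :
    R232 (fun j => 1 - g j) = fun i => 1 - R232 g i := by
  funext i
  unfold R232 maj
  beta_reduce
  have e1 := hb (i-1); have e2 := hb i; have e3 := hb (i+1)
  rcases e1 with e1|e1 <;> rcases e2 with e2|e2 <;> rcases e3 with e3|e3 <;>
    rw [e1, e2, e3] <;> norm_num

lemma c232_iter [NeZero L] (m : ℕ) :
    ∀ g : ZMod L → ℤ, BinM g →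
      R232^[m] (fun j => 1 - g j) = fun i => 1 - R232^[m] g i := by
  induction m with
  | zero => intro g hb; simp
  | succ m ih =>
      intro g hb
      rw [Function.iterate_succ_apply, Function.iterate_succ_apply, c232 g hb,
        ih (R232 g) bin_R232M]

lemma alt232 (g : ZMod L → ℤ) (hb : BinM g) (ha : ∀ i, g (i+1) = 1 - g i) :
    ∀ i, R232 g i = 1 - g i := by
  intro i
  have h1 : g i = 1 - g (i-1) := by
    have := ha (i-1); rw [sub_add_cancel] at this; exact this
  have h2 := ha i
  unfold R232 maj
  rcases hb (i-1) with e|e <;> rw [e] at h1 <;> rw [h2, h1, e] <;> norm_num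

lemma alt_iter [NeZero L] (m : ℕ) :
    ∀ g : ZMod L → ℤ, BinM g → (∀ i, g (i+1) = 1 - g i) →
      (∀ i, (R232^[m] g) (i+1) = 1 - (R232^[m] g) i) := by
  induction m with
  | zero => intro g hb ha; simpa using ha
  | succ m ih =>
      intro g hb ha
      rw [Function.iterate_succ_apply]
      refine ih (R232 g) bin_R232M ?_
      intro i
      rw [alt232 g hb ha (i+1), alt232 g hb ha i, ha i]


lemma sum_one_sub_Icc (f : ℤ → ℤ) (a b : ℤ) (h : a ≤ b) :
    ∑ j ∈ Finset.Icc a b, (1 - f j) = (b + 1 - a) - ∑ j ∈ Finset.Icc a b, f j := by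
  rw [Finset.sum_sub_distrib, Finset.sum_const, nsmul_eq_mul, mul_one, Int.card_Icc,
    Int.toNat_of_nonneg (by omega)]


end DC


/-- Fukś 1997: rules 184 then 232 classify density on a cyclic string. -/
theorem density_classification_1d (L : ℕ) [NeZero L] (hL : 2 ≤ L)
    (s : ZMod L → ℤ) (hs : ∀ i, s i = 0 ∨ s i = 1) :
    (2 * ∑ i : ZMod L, s i < (L : ℤ) →
      R232^[(L - 1) / 2] (R184^[(L - 2) / 2] s) = fun _ => 0) ∧
    ((L : ℤ) < 2 * ∑ i : ZMod L, s i →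
      R232^[(L - 1) / 2] (R184^[(L - 2) / 2] s) = fun _ => 1) ∧
    (2 * ∑ i : ZMod L, s i = (L : ℤ) →
      ∀ i, R232^[(L - 1) / 2] (R184^[(L - 2) / 2] s) i ≠
           R232^[(L - 1) / 2] (R184^[(L - 2) / 2] s) (i + 1)) := by
  have hLpos : 0 < L := Nat.pos_of_ne_zero (NeZero.ne L)
  set n := (L - 2) / 2 with hn
  set m := (L - 1) / 2 with hm
  set g := R184^[n] s with hg
  have hgbin : DC.BinM g := DC.bin_iter (fun u hu => DC.bin_R184M hu) n s hs
  have hgsum : ∑ i : ZMod L, g i = ∑ i : ZMod L, s i := DC.sum_R184_iter n s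
  have hsbZ : DC.Bin (fun j : ℤ => s (j : ZMod L)) := fun j => hs _
  have hcomp184 := DC.iterate_comp (F := R184 (L := L)) (G := DC.R184Z) DC.comp184 n s
  have no11_of : 2 * (∑ i : ZMod L, s i) ≤ (L:ℤ) →
      ∀ i : ZMod L, ¬ (g i = 1 ∧ g (i+1) = 1) := by
    intro hd i hcon
    obtain ⟨h1, h2⟩ := hcon
    have hx : (((i.val : ℤ)) : ZMod L) = i := by
      rw [Int.cast_natCast]; exact ZMod.natCast_rightInverse i
    set x : ℤ := (i.val : ℤ)
    have e1 : DC.R184Z^[n] (fun j : ℤ => s (j:ZMod L)) x = 1 := by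
      rw [hcomp184]; show R184^[n] s ((x : ZMod L)) = 1; rw [hx]; exact h1
    have e2 : DC.R184Z^[n] (fun j : ℤ => s (j:ZMod L)) (x+1) = 1 := by
      rw [hcomp184]
      show R184^[n] s (((x+1 : ℤ) : ZMod L)) = 1
      have hc : ((x+1 : ℤ) : ZMod L) = (x:ZMod L) + 1 := by push_cast; ring
      rw [hc, hx]; exact h2
    obtain ⟨-, -, hsum⟩ := DC.jamA n _ hsbZ x e1 e2
    have hle := DC.sum_window_le s (fun i => by rcases hs i with h|h <;> omega)
      (x - n) (x + n + 1) (by omega) (by omega)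
    omega
  have no00_of : (L:ℤ) ≤ 2 * (∑ i : ZMod L, s i) →
      ∀ i : ZMod L, ¬ (g i = 0 ∧ g (i+1) = 0) := by
    intro hd i hcon
    obtain ⟨h1, h2⟩ := hcon
    have hx : (((i.val : ℤ)) : ZMod L) = i := by
      rw [Int.cast_natCast]; exact ZMod.natCast_rightInverse i
    set x : ℤ := (i.val : ℤ)
    have e1 : DC.R184Z^[n] (fun j : ℤ => s (j:ZMod L)) x = 0 := by
      rw [hcomp184]; show R184^[n] s ((x : ZMod L)) = 0; rw [hx]; exact h1
    have e2 : DC.R184Z^[n] (fun j : ℤ => s (j:ZMod L)) (x+1) = 0 := by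
      rw [hcomp184]
      show R184^[n] s (((x+1 : ℤ) : ZMod L)) = 0
      have hc : ((x+1 : ℤ) : ZMod L) = (x:ZMod L) + 1 := by push_cast; ring
      rw [hc, hx]; exact h2
    obtain ⟨-, -, hsum⟩ := DC.jamA0 n _ hsbZ x e1 e2
    have hcompl := DC.sum_one_sub_Icc (fun j : ℤ => s (j:ZMod L)) (x - n) (x + n + 1)
      (by omega)
    have hle := DC.sum_window_le (fun i => 1 - s i)
      (fun i => by have h := hs i; omega)
      (x - n) (x + n + 1) (by omega) (by omega)
    have htot : ∑ i : ZMod L, (1 - s i) = (L:ℤ) - ∑ i : ZMod L, s i :=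
      DC.sum_one_sub_univ s
    omega
  refine ⟨?_, ?_, ?_⟩
  · intro hlt
    refine DC.phase2_zero g hgbin (no11_of (le_of_lt hlt)) m (by omega) ?_
    rw [hgsum]
    omega
  · intro hgt
    have hno00 := no00_of (le_of_lt hgt)
    have hb' : DC.BinM (fun i => 1 - g i) := by
      intro i; have h := hgbin i; simp only []; omega
    have h11' : ∀ i : ZMod L, ¬ ((1 - g i) = 1 ∧ (1 - g (i+1)) = 1) := by
      intro i hcon
      exact hno00 i ⟨by omega, by omega⟩
    have hz := DC.phase2_zero (fun i => 1 - g i) hb' (fun i => h11' i) m (by omega) ?_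
    · have hc := DC.c232_iter m g hgbin
      rw [hc] at hz
      funext i
      have := congrFun hz i
      have hbin' : DC.BinM (R232^[m] g) := DC.bin_iter (fun u _ => DC.bin_R232M) m g hgbin
      rcases hbin' i with h|h <;> omega
    · have : ∑ i : ZMod L, (1 - g i) = (L:ℤ) - ∑ i : ZMod L, g i := DC.sum_one_sub_univ g
      rw [this, hgsum]
      omega
  · intro heq i
    have hno11 := no11_of (le_of_eq heq)
    have hno00 := no00_of (ge_of_eq heq)
    have halt : ∀ i : ZMod L, g (i+1) = 1 - g i := by
      intro i
      have a1 := hgbin i; have a2 := hgbin (i+1)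
      have b1 := hno11 i; have b2 := hno00 i
      omega
    have halt' := DC.alt_iter m g hgbin halt
    have hbin' : DC.BinM (R232^[m] g) := DC.bin_iter (fun u _ => DC.bin_R232M) m g hgbin
    have h1 := halt' i
    have h2 := hbin' i
    omega
end

section
/- The two-dimensional lane-changing rule F_X is number-conserving: for any L×L binary array s with periodic boundary conditions and any binary array X, the sum of entries of F_X(s) equals the sum of entries of s. -/
/-- The two-dimensional lane-changing rule F_X, algebraic form. -/
def FX {L : ℕ} (X s : ZMod L × ZMod L → ℤ) (p : ZMod L × ZMod L) : ℤ :=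
  let i := p.1; let j := p.2
  s (i, j) + (1 - s (i, j)) * s (i, j - 1) * s (i + 1, j - 1) * X (i, j - 1)
    - s (i, j) * (1 - s (i, j + 1)) * s (i + 1, j) * X (i, j)

/-- The lane-changing rule F_X is number-conserving. -/
theorem FX_number_conserving (L : ℕ) [NeZero L]
    (s X : ZMod L × ZMod L → ℤ)
    (hs : ∀ p, s p = 0 ∨ s p = 1) (hX : ∀ p, X p = 0 ∨ X p = 1) :
    ∑ p : ZMod L × ZMod L, FX X s p = ∑ p : ZMod L × ZMod L, s p := by
  have h : ∑ p : ZMod L × ZMod L,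
      (1 - s (p.1, p.2)) * s (p.1, p.2 - 1) * s (p.1 + 1, p.2 - 1) * X (p.1, p.2 - 1)
      = ∑ p : ZMod L × ZMod L,
      s (p.1, p.2) * (1 - s (p.1, p.2 + 1)) * s (p.1 + 1, p.2) * X (p.1, p.2) := by
    apply Fintype.sum_equiv (Equiv.prodCongr (Equiv.refl _) (Equiv.subRight (1 : ZMod L)))
    intro p
    show _ = s (p.1, p.2 - 1) * (1 - s (p.1, p.2 - 1 + 1)) * s (p.1 + 1, p.2 - 1) * X (p.1, p.2 - 1)
    rw [sub_add_cancel]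
    ring
  simp only [FX, Finset.sum_sub_distrib, Finset.sum_add_distrib]
  rw [h, add_sub_cancel_right]
end

section
/- The crowd-avoidance rule G_X is number-conserving: for any L×L binary array s with periodic boundary conditions and any binary array X, the sum of entries of G_X(s) equals the sum of entries of s. -/
/-- The two-dimensional crowd-avoidance rule G_X, defined by cases. -/
def GX {L : ℕ} (X s : ZMod L × ZMod L → ℤ) (p : ZMod L × ZMod L) : ℤ :=
  let i := p.1; let j := p.2
  if s (i, j) = 0 ∧ s (i - 1, j) = 0 ∧ s (i + 1, j) = 0 ∧
      s (i, j - 1) = 1 ∧ X (i, j - 1) = 1 then 1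
  else if s (i, j) = 1 ∧ s (i - 1, j + 1) = 0 ∧ s (i, j + 1) = 0 ∧
      s (i + 1, j + 1) = 0 ∧ X (i, j) = 1 then 0
  else if s (i, j) = 0 ∧ s (i - 1, j - 1) = 1 ∧ s (i, j - 1) = 1 ∧
      s (i + 1, j - 1) = 1 ∧ X (i, j - 1) = 1 then 1
  else if s (i, j) = 1 ∧ s (i, j + 1) = 0 ∧ s (i - 1, j) = 1 ∧
      s (i + 1, j) = 1 ∧ X (i, j) = 1 then 0
  else s (i, j)

/-- The local flow of the crowd-avoidance rule: 1 when the particle at `p`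
hops to `(p.1, p.2 + 1)`, and 0 otherwise. -/
def GXmove {L : ℕ} (X s : ZMod L × ZMod L → ℤ) (p : ZMod L × ZMod L) : ℤ :=
  if (s (p.1, p.2) = 1 ∧ s (p.1 - 1, p.2 + 1) = 0 ∧ s (p.1, p.2 + 1) = 0 ∧
      s (p.1 + 1, p.2 + 1) = 0 ∧ X (p.1, p.2) = 1) ∨
     (s (p.1, p.2) = 1 ∧ s (p.1, p.2 + 1) = 0 ∧ s (p.1 - 1, p.2) = 1 ∧
      s (p.1 + 1, p.2) = 1 ∧ X (p.1, p.2) = 1) then (1 : ℤ) else 0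

/-- Abstract version of the local conservation identity. -/
lemma GX_flow_abstract (a b c d e f g h k x y : ℤ) :
    (if a = 0 ∧ b = 0 ∧ c = 0 ∧ d = 1 ∧ x = 1 then (1:ℤ)
     else if a = 1 ∧ e = 0 ∧ f = 0 ∧ g = 0 ∧ y = 1 then 0
     else if a = 0 ∧ h = 1 ∧ d = 1 ∧ k = 1 ∧ x = 1 then 1
     else if a = 1 ∧ f = 0 ∧ b = 1 ∧ c = 1 ∧ y = 1 then 0
     else a)
    = a + (if (d = 1 ∧ b = 0 ∧ a = 0 ∧ c = 0 ∧ x = 1) ∨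
              (d = 1 ∧ a = 0 ∧ h = 1 ∧ k = 1 ∧ x = 1) then 1 else 0)
        - (if (a = 1 ∧ e = 0 ∧ f = 0 ∧ g = 0 ∧ y = 1) ∨
              (a = 1 ∧ f = 0 ∧ b = 1 ∧ c = 1 ∧ y = 1) then 1 else 0) := by
  by_cases h1 : a = 0 ∧ b = 0 ∧ c = 0 ∧ d = 1 ∧ x = 1
  · obtain ⟨e1, e2, e3, e4, e5⟩ := h1
    rw [if_pos ⟨e1, e2, e3, e4, e5⟩, if_pos (Or.inl ⟨e4, e2, e1, e3, e5⟩),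
      if_neg (by rintro (⟨w, -⟩ | ⟨w, -⟩) <;> omega)]
    omega
  by_cases h2 : a = 1 ∧ e = 0 ∧ f = 0 ∧ g = 0 ∧ y = 1
  · obtain ⟨e1, e2, e3, e4, e5⟩ := h2
    rw [if_neg h1, if_pos ⟨e1, e2, e3, e4, e5⟩,
      if_neg (by rintro (⟨-, -, w, -⟩ | ⟨-, w, -⟩) <;> omega),
      if_pos (Or.inl ⟨e1, e2, e3, e4, e5⟩)]
    omega
  by_cases h3 : a = 0 ∧ h = 1 ∧ d = 1 ∧ k = 1 ∧ x = 1
  · obtain ⟨e1, e2, e3, e4, e5⟩ := h3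
    rw [if_neg h1, if_neg h2, if_pos ⟨e1, e2, e3, e4, e5⟩,
      if_pos (Or.inr ⟨e3, e1, e2, e4, e5⟩),
      if_neg (by rintro (⟨w, -⟩ | ⟨w, -⟩) <;> omega)]
    omega
  by_cases h4 : a = 1 ∧ f = 0 ∧ b = 1 ∧ c = 1 ∧ y = 1
  · obtain ⟨e1, e2, e3, e4, e5⟩ := h4
    rw [if_neg h1, if_neg h2, if_neg h3, if_pos ⟨e1, e2, e3, e4, e5⟩,
      if_neg (by rintro (⟨-, -, w, -⟩ | ⟨-, w, -⟩) <;> omega),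
      if_pos (Or.inr ⟨e1, e2, e3, e4, e5⟩)]
    omega
  · rw [if_neg h1, if_neg h2, if_neg h3, if_neg h4,
      if_neg (by rintro (⟨w1, w2, w3, w4, w5⟩ | ⟨w1, w2, w3, w4, w5⟩); exacts [h1 ⟨w3, w2, w4, w1, w5⟩, h3 ⟨w2, w3, w1, w4, w5⟩]),
      if_neg (by rintro (w | w); exacts [h2 w, h4 w])]
    ring

/-- Local conservation: the update equals the old value plus inflow minus outflow. -/
lemma GX_flow {L : ℕ} (X s : ZMod L × ZMod L → ℤ) (i j : ZMod L) :
    GX X s (i, j) = s (i, j) + GXmove X s (i, j - 1) - GXmove X s (i, j) := by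
  simp only [GX, GXmove]
  rw [sub_add_cancel]
  exact GX_flow_abstract _ _ _ _ _ _ _ _ _ _ _

/-- The crowd-avoidance rule G_X is number-conserving. -/
theorem GX_number_conserving (L : ℕ) [NeZero L]
    (s X : ZMod L × ZMod L → ℤ)
    (hs : ∀ p, s p = 0 ∨ s p = 1) (hX : ∀ p, X p = 0 ∨ X p = 1) :
    ∑ p : ZMod L × ZMod L, GX X s p = ∑ p : ZMod L × ZMod L, s p := by
  calc ∑ p : ZMod L × ZMod L, GX X s p
      = ∑ p : ZMod L × ZMod L, (s p + GXmove X s (p.1, p.2 - 1) - GXmove X s p) :=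
        Finset.sum_congr rfl fun p _ => GX_flow X s p.1 p.2
    _ = ∑ p : ZMod L × ZMod L, s p
        + ∑ p : ZMod L × ZMod L, GXmove X s (p.1, p.2 - 1)
        - ∑ p : ZMod L × ZMod L, GXmove X s p := by
        rw [Finset.sum_sub_distrib, Finset.sum_add_distrib]
    _ = ∑ p : ZMod L × ZMod L, s p := by
        have : ∑ p : ZMod L × ZMod L, GXmove X s (p.1, p.2 - 1)
            = ∑ p : ZMod L × ZMod L, GXmove X s p :=
          Fintype.sum_equiv ((Equiv.refl (ZMod L)).prodCongr (Equiv.subRight (1 : ZMod L)))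
            _ _ (fun p => rfl)
        rw [this]; ring
end

section
/- Rule 184 preserves the number of 01 'interfaces' or decreases the number of blocked cars: the number of indices i with s_i = 1 and s_{i+1} = 1 (blocked particles) is non-increasing under R184. -/
/-- The number of blocked particles (adjacent 11 pairs) is non-increasing
under rule 184. -/
theorem rule184_blocked_nonincreasing (L : ℕ) [NeZero L] (hL : 3 ≤ L)
    (s : ZMod L → ℤ) (hs : ∀ i, s i = 0 ∨ s i = 1) :
    (Finset.univ.filter (fun i : ZMod L => R184 s i = 1 ∧ R184 s (i + 1) = 1)).card ≤
    (Finset.univ.filter (fun i : ZMod L => s i = 1 ∧ s (i + 1) = 1)).card := by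
  have key : ∀ i : ZMod L, R184 s i = 1 → R184 s (i + 1) = 1 →
      s (i + 1) = 1 ∧ s (i + 1 + 1) = 1 := by
    intro i h1 h2
    simp only [R184, add_sub_cancel_right] at h1 h2
    rcases hs (i - 1) with ha | ha <;> rcases hs i with hb | hb <;>
      rcases hs (i + 1) with hc | hc <;> rcases hs (i + 1 + 1) with hd | hd <;>
      simp only [ha, hb, hc, hd] at h1 h2 <;> first | exact ⟨hc, hd⟩ | omega
  apply Finset.card_le_card_of_injOn (fun i => i + 1)
  · intro i hi
    simp only [Finset.mem_coe, Finset.mem_filter, Finset.mem_univ, true_and] at hi ⊢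
    exact key i hi.1 hi.2
  · intro a _ b _ h
    simpa using h
end
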